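/- For any graphs G and H, DOM(G □ H) ≥ max{DOM(G)·α(H), α(G)·DOM(H)}. -/

import Mathlib

open SimpleGraph

variable {V : Type*}

/-- `D` is an orientation of the simple graph `G`: arcs only along edges, and each edge
gets exactly one of its two possible directions. -/
def IsOrientation (G : SimpleGraph V) (D : V → V → Prop) : Prop :=
  (∀ u v, D u v → G.Adj u v) ∧ (∀ u v, G.Adj u v → (D u v ↔ ¬ D v u))

/-- `S` is a dominating set of the digraph `D`. -/
def IsDomSet (D : V → V → Prop) (S : Finset V) : Prop :=
  ∀ v, v ∉ S → ∃ u ∈ S, D u v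

/-- Domination number of a digraph. -/
noncomputable def domNum (D : V → V → Prop) : ℕ :=
  sInf {n | ∃ S : Finset V, S.card = n ∧ IsDomSet D S}

/-- Orientable domination number of a graph. -/
noncomputable def DOM (G : SimpleGraph V) : ℕ :=
  sSup {n | ∃ D : V → V → Prop, IsOrientation G D ∧ domNum D = n}

/-- Independence number. -/
noncomputable def indepNum (G : SimpleGraph V) : ℕ :=
  sSup {n | ∃ S : Finset V, S.card = n ∧ ∀ u ∈ S, ∀ v ∈ S, ¬ G.Adj u v}

/-- Matching number. -/
noncomputable def matchNum (G : SimpleGraph V) : ℕ :=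
  sSup {n | ∃ M : Finset (Sym2 V), M.card = n ∧ (∀ e ∈ M, e ∈ G.edgeSet) ∧
    ∀ e ∈ M, ∀ f ∈ M, e ≠ f → ∀ v, v ∈ e → v ∉ f}

/-- Maximum order of a bipartite induced subgraph. -/
noncomputable def bipNum (G : SimpleGraph V) : ℕ :=
  sSup {n | ∃ s : Finset V, s.card = n ∧ (G.induce (s : Set V)).Colorable 2}

/-- Join of `G` with a single universal vertex (`none`). -/
def joinK1 (G : SimpleGraph V) : SimpleGraph (Option V) :=
  SimpleGraph.fromRel (fun a b => a = none ∨ ∃ u v, a = some u ∧ b = some v ∧ G.Adj u v)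

/-- Lexicographic product `G ∘ H`. -/
def lexProd {W : Type*} (G : SimpleGraph V) (H : SimpleGraph W) : SimpleGraph (V × W) :=
  SimpleGraph.fromRel (fun a b => G.Adj a.1 b.1 ∨ (a.1 = b.1 ∧ H.Adj a.2 b.2))

/-- Corona `G ⊙ H`: vertex `(u, none)` is the vertex `u` of `G`, the vertices `(u, some w)`
form the copy of `H` joined to `u`. -/
def corona {W : Type*} (G : SimpleGraph V) (H : SimpleGraph W) : SimpleGraph (V × Option W) :=
  SimpleGraph.fromRel (fun a b =>
    (a.2 = none ∧ b.2 = none ∧ G.Adj a.1 b.1) ∨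
    (a.1 = b.1 ∧ ∃ w w', a.2 = some w ∧ b.2 = some w' ∧ H.Adj w w') ∨
    (a.1 = b.1 ∧ a.2 = none ∧ b.2 ≠ none))

/-- A digraph is acyclic if it has no directed cycle. -/
def DigraphAcyclic (D : V → V → Prop) : Prop :=
  ¬ ∃ (m : ℕ) (c : ℕ → V), 0 < m ∧ (∀ i < m, D (c i) (c (i + 1))) ∧ c m = c 0

/-- A packing of a digraph: no arc joins two of its vertices and no vertex has two
out-neighbors in it. -/
def IsPacking (D : V → V → Prop) (P : Finset V) : Prop :=
  (∀ u ∈ P, ∀ v ∈ P, ¬ D u v) ∧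
  (∀ u ∈ P, ∀ v ∈ P, u ≠ v → ∀ w, ¬ (D w u ∧ D w v))

/-- Packing number of a digraph. -/
noncomputable def packNum (D : V → V → Prop) : ℕ :=
  sSup {n | ∃ P : Finset V, P.card = n ∧ IsPacking D P}

section DOMAux

variable {V₁ W₁ : Type*}

lemma exists_orientation' (G : SimpleGraph V₁) : ∃ D, IsOrientation G D := by
  classical
  refine ⟨fun u v => G.Adj u v ∧ WellOrderingRel u v, fun u v h => h.1, fun u v hadj => ?_⟩
  constructor
  · rintro ⟨-, h⟩ ⟨-, h'⟩
    exact asymm h h'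
  · intro h
    refine ⟨hadj, ?_⟩
    rcases trichotomous_of WellOrderingRel u v with h1 | h1 | h1
    · exact h1
    · exact absurd h1 hadj.ne
    · exact absurd ⟨hadj.symm, h1⟩ h

lemma univ_domSet [Fintype V₁] (D : V₁ → V₁ → Prop) : IsDomSet D (Finset.univ) :=
  fun v hv => absurd (Finset.mem_univ v) hv

lemma domNum_le' [Fintype V₁] (D : V₁ → V₁ → Prop) {S : Finset V₁} (h : IsDomSet D S) :
    domNum D ≤ S.card :=
  Nat.sInf_le ⟨S, rfl, h⟩

lemma exists_domSet_card [Fintype V₁] (D : V₁ → V₁ → Prop) :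
    ∃ S : Finset V₁, S.card = domNum D ∧ IsDomSet D S := by
  have hne : {n | ∃ S : Finset V₁, S.card = n ∧ IsDomSet D S}.Nonempty :=
    ⟨Finset.univ.card, Finset.univ, rfl, univ_domSet D⟩
  exact Nat.sInf_mem hne

lemma DOM_bddAbove [Fintype V₁] (G : SimpleGraph V₁) :
    BddAbove {n | ∃ D : V₁ → V₁ → Prop, IsOrientation G D ∧ domNum D = n} := by
  refine ⟨Fintype.card V₁, ?_⟩
  rintro n ⟨D, -, rfl⟩
  calc domNum D ≤ (Finset.univ : Finset V₁).card := domNum_le' D (univ_domSet D)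
    _ = Fintype.card V₁ := Finset.card_univ

lemma le_DOM' [Fintype V₁] {G : SimpleGraph V₁} {D : V₁ → V₁ → Prop}
    (h : IsOrientation G D) : domNum D ≤ DOM G :=
  le_csSup (DOM_bddAbove G) ⟨D, h, rfl⟩

lemma exists_DOM_orientation [Fintype V₁] (G : SimpleGraph V₁) :
    ∃ D : V₁ → V₁ → Prop, IsOrientation G D ∧ domNum D = DOM G := by
  obtain ⟨D, hD⟩ := exists_orientation' G
  have hne : {n | ∃ D : V₁ → V₁ → Prop, IsOrientation G D ∧ domNum D = n}.Nonempty :=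
    ⟨domNum D, D, hD, rfl⟩
  exact Nat.sSup_mem hne (DOM_bddAbove G)

lemma exists_indep_set [Fintype V₁] (G : SimpleGraph V₁) :
    ∃ S : Finset V₁, S.card = _root_.indepNum G ∧ ∀ u ∈ S, ∀ v ∈ S, ¬ G.Adj u v := by
  have hne : {n | ∃ S : Finset V₁, S.card = n ∧ ∀ u ∈ S, ∀ v ∈ S, ¬ G.Adj u v}.Nonempty :=
    ⟨0, ∅, rfl, by simp⟩
  refine Nat.sSup_mem hne ⟨Fintype.card V₁, ?_⟩
  rintro n ⟨S, rfl, -⟩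
  exact S.card_le_univ

lemma DOM_le_equiv {V' : Type*} [Fintype V₁] [Fintype V'] (G : SimpleGraph V₁)
    (G' : SimpleGraph V') (e : V₁ ≃ V') (he : ∀ u v, G.Adj u v ↔ G'.Adj (e u) (e v)) :
    DOM G ≤ DOM G' := by
  classical
  obtain ⟨D, hor, hD⟩ := exists_DOM_orientation G
  set D' : V' → V' → Prop := fun u' v' => D (e.symm u') (e.symm v') with hD'def
  have hor' : IsOrientation G' D' := by
    constructor
    · intro u v h
      have := (he _ _).1 (hor.1 _ _ h)
      simpa using this
    · intro u v hadj
      exact hor.2 _ _ ((he (e.symm u) (e.symm v)).2 (by simpa using hadj))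
  have hdom : domNum D' = domNum D := by
    apply le_antisymm
    · refine le_trans ?_ (le_of_eq rfl)
      obtain ⟨S, hcard, hdomS⟩ := exists_domSet_card D
      have hdom' : IsDomSet D' (S.map e.toEmbedding) := by
        intro v' hv'
        have hns : e.symm v' ∉ S := fun hmem => hv' (Finset.mem_map.2 ⟨_, hmem, by simp⟩)
        obtain ⟨u, huS, hu⟩ := hdomS _ hns
        refine ⟨e u, Finset.mem_map_of_mem _ huS, ?_⟩
        show D (e.symm (e u)) (e.symm v')
        simpa using hu
      calc domNum D' ≤ (S.map e.toEmbedding).card := domNum_le' _ hdom'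
        _ = S.card := Finset.card_map _
        _ = domNum D := hcard
    · obtain ⟨S, hcard, hdomS⟩ := exists_domSet_card D'
      have hdom' : IsDomSet D (S.map e.symm.toEmbedding) := by
        intro v hv
        have hns : e v ∉ S := fun hmem => hv (Finset.mem_map.2 ⟨_, hmem, by simp⟩)
        obtain ⟨u, huS, hu⟩ := hdomS _ hns
        refine ⟨e.symm u, Finset.mem_map_of_mem _ huS, ?_⟩
        have : D (e.symm u) (e.symm (e v)) := hu
        simpa using this
      calc domNum D ≤ (S.map e.symm.toEmbedding).card := domNum_le' _ hdom'
        _ = S.card := Finset.card_map _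
        _ = domNum D' := hcard
  calc DOM G = domNum D' := by rw [hdom, hD]
    _ ≤ DOM G' := le_DOM' hor'

lemma key_ineq [Fintype V₁] [Fintype W₁] (G : SimpleGraph V₁) (H : SimpleGraph W₁) :
    DOM G * _root_.indepNum H ≤ DOM (G □ H) := by
  classical
  obtain ⟨DG, horG, hDG⟩ := exists_DOM_orientation G
  obtain ⟨A, hA, hind⟩ := exists_indep_set H
  obtain ⟨E, horE⟩ := exists_orientation' H
  set DH : W₁ → W₁ → Prop := fun a b => H.Adj a b ∧ (a ∈ A ∨ (b ∉ A ∧ E a b)) with hDHdef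
  have horH : IsOrientation H DH := by
    constructor
    · exact fun a b h => h.1
    · intro a b hadj
      by_cases haA : a ∈ A <;> by_cases hbA : b ∈ A
      · exact absurd hadj (hind a haA b hbA)
      · constructor
        · rintro - ⟨-, h | ⟨h, -⟩⟩
          · exact hbA h
          · exact h haA
        · exact fun _ => ⟨hadj, Or.inl haA⟩
      · constructor
        · rintro ⟨-, h | ⟨h, -⟩⟩
          · exact absurd h haA
          · exact absurd hbA h
        · intro h
          exact absurd ⟨hadj.symm, Or.inl hbA⟩ h
      · have hE := horE.2 a b hadj
        constructor
        · rintro ⟨-, h | ⟨-, hab⟩⟩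
          · exact absurd h haA
          · rintro ⟨-, h' | ⟨-, hba⟩⟩
            · exact hbA h'
            · exact (hE.1 hab) hba
        · intro h
          refine ⟨hadj, Or.inr ⟨hbA, ?_⟩⟩
          by_contra hEab
          exact h ⟨hadj.symm, Or.inr ⟨haA, (horE.2 b a hadj.symm).2 hEab⟩⟩
  set Dp : (V₁ × W₁) → (V₁ × W₁) → Prop :=
    fun p q => (p.2 = q.2 ∧ DG p.1 q.1) ∨ (p.1 = q.1 ∧ DH p.2 q.2) with hDpdef
  have horP : IsOrientation (G □ H) Dp := by
    constructor
    · rintro p q (⟨h2, hD⟩ | ⟨h1, hD⟩)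
      · exact SimpleGraph.boxProd_adj.2 (Or.inl ⟨horG.1 _ _ hD, h2⟩)
      · exact SimpleGraph.boxProd_adj.2 (Or.inr ⟨horH.1 _ _ hD, h1⟩)
    · intro p q hadj
      rcases SimpleGraph.boxProd_adj.1 hadj with ⟨hG, h2⟩ | ⟨hH, h1⟩
      · have hne : p.1 ≠ q.1 := hG.ne
        have hiff := horG.2 _ _ hG
        constructor
        · rintro (⟨-, hD⟩ | ⟨h1, -⟩)
          · rintro (⟨-, hD'⟩ | ⟨h1', -⟩)
            · exact (hiff.1 hD) hD'
            · exact hne h1'.symm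
          · exact absurd h1 hne
        · intro hn
          exact Or.inl ⟨h2, hiff.2 fun hD' => hn (Or.inl ⟨h2.symm, hD'⟩)⟩
      · have hne : p.2 ≠ q.2 := hH.ne
        have hiff := horH.2 _ _ hH
        constructor
        · rintro (⟨h2, -⟩ | ⟨-, hD⟩)
          · exact absurd h2 hne
          · rintro (⟨h2', -⟩ | ⟨-, hD'⟩)
            · exact hne h2'.symm
            · exact (hiff.1 hD) hD'
        · intro hn
          exact Or.inr ⟨h1, hiff.2 fun hD' => hn (Or.inr ⟨h1.symm, hD'⟩)⟩
  have hbound : ∀ S : Finset (V₁ × W₁), IsDomSet Dp S → DOM G * A.card ≤ S.card := by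
    intro S hS
    have layer : ∀ a ∈ A, DOM G ≤ (S.filter (fun p => p.2 = a)).card := by
      intro a haA
      have hdomT : IsDomSet DG ((S.filter (fun p => p.2 = a)).image Prod.fst) := by
        intro v hv
        have hvS : (v, a) ∉ S := by
          intro hmem
          exact hv (Finset.mem_image.2 ⟨(v, a), Finset.mem_filter.2 ⟨hmem, rfl⟩, rfl⟩)
        obtain ⟨q, hqS, hq⟩ := hS (v, a) hvS
        rcases hq with ⟨h2, hD⟩ | ⟨h1, hD⟩
        · exact ⟨q.1, Finset.mem_image.2 ⟨q, Finset.mem_filter.2 ⟨hqS, h2⟩, rfl⟩, hD⟩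
        · rcases hD.2 with h | ⟨h, -⟩
          · exact absurd hD.1 (hind _ h _ haA)
          · exact absurd haA h
      calc DOM G = domNum DG := hDG.symm
        _ ≤ ((S.filter (fun p => p.2 = a)).image Prod.fst).card := domNum_le' _ hdomT
        _ ≤ (S.filter (fun p => p.2 = a)).card := Finset.card_image_le
    have hfib : ∑ a ∈ A, (S.filter (fun p => p.2 = a)).card
        = (S.filter (fun p => p.2 ∈ A)).card := by
      rw [Finset.card_eq_sum_card_fiberwise
        (f := Prod.snd) (t := A) (s := S.filter (fun p => p.2 ∈ A))
          (fun x hx => (Finset.mem_filter.1 (Finset.mem_coe.1 hx)).2)]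
      refine Finset.sum_congr rfl fun a haA => ?_
      congr 1
      ext p
      simp only [Finset.mem_filter]
      constructor
      · rintro ⟨h1, h2⟩
        exact ⟨⟨h1, h2 ▸ haA⟩, h2⟩
      · rintro ⟨⟨h1, -⟩, h2⟩
        exact ⟨h1, h2⟩
    calc DOM G * A.card = ∑ _a ∈ A, DOM G := by
          rw [Finset.sum_const, smul_eq_mul, mul_comm]
      _ ≤ ∑ a ∈ A, (S.filter (fun p => p.2 = a)).card := Finset.sum_le_sum layer
      _ = (S.filter (fun p => p.2 ∈ A)).card := hfib
      _ ≤ S.card := Finset.card_filter_le _ _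
  obtain ⟨S, hcard, hdom⟩ := exists_domSet_card Dp
  have hle : DOM G * _root_.indepNum H ≤ domNum Dp := by
    rw [← hA, ← hcard]
    exact hbound S hdom
  exact hle.trans (le_DOM' horP)

end DOMAux

theorem stmt10 {V W : Type*} [Fintype V] [Fintype W]
    (G : SimpleGraph V) (H : SimpleGraph W) :
    max (DOM G * _root_.indepNum H) (_root_.indepNum G * DOM H) ≤ DOM (G □ H) := by
  refine max_le (key_ineq G H) ?_
  have h1 : DOM H * _root_.indepNum G ≤ DOM (H □ G) := key_ineq H G
  have h2 : DOM (H □ G) ≤ DOM (G □ H) := by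
    refine DOM_le_equiv _ _ (Equiv.prodComm W V) fun u v => ?_
    simp only [SimpleGraph.boxProd_adj, Equiv.prodComm_apply, Prod.fst_swap, Prod.snd_swap]
    tauto
  rw [mul_comm]
  exact h1.trans h2
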